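/- Let P_+ = {(x,y) ∈ ℝ² : y ≥ -x, x ≥ y, x ≤ 2, y ≥ -2, x - y ≤ 3} and π(x,y) = (x-y)²(x+y)². Then the barycenter b = (∫_{P_+} v π dv)/(∫_{P_+} π dv) does not lie in the closed cone 2ρ + Ξ̄, where 2ρ = (2,0) and Ξ̄ = {(x,y) : x ≥ |y|} is the cone spanned by α₁=(1,-1) and α₂=(1,1). Equivalently, b₁ - 2 < |b₂|. -/

import Mathlib

open MeasureTheory Set

namespace Stmt9Aux

noncomputable section

/-- The moment polytope region viewed inside `ℝ × ℝ`. -/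
def S : Set (ℝ × ℝ) := {p | -p.1 ≤ p.2 ∧ p.2 ≤ p.1 ∧ p.1 ≤ 2 ∧ -2 ≤ p.2 ∧ p.1 - p.2 ≤ 3}

/-- lower boundary of the region, as a function of `x`. -/
def lo (x : ℝ) : ℝ := max (-x) (x - 3)

lemma lo_cont : Continuous lo := continuous_neg.max (continuous_id.sub continuous_const)

lemma S_eq : S = {p : ℝ × ℝ | p.1 ∈ Icc (0:ℝ) 2 ∧ p.2 ∈ Icc (lo p.1) p.1} := by
  ext ⟨x, y⟩
  simp only [S, lo, mem_setOf_eq, mem_Icc, max_le_iff]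
  constructor
  · rintro ⟨h1, h2, h3, h4, h5⟩
    exact ⟨⟨by linarith, h3⟩, ⟨h1, by linarith⟩, h2⟩
  · rintro ⟨⟨h0, h3⟩, ⟨h1, h5⟩, h2⟩
    exact ⟨h1, h2, h3, by linarith, by linarith⟩

lemma S_closed : IsClosed S := by
  have hS : S = {p : ℝ × ℝ | -p.1 ≤ p.2} ∩ {p | p.2 ≤ p.1} ∩ {p | p.1 ≤ 2} ∩
      {p | -2 ≤ p.2} ∩ {p | p.1 - p.2 ≤ 3} := by
    ext p; simp only [S, mem_setOf_eq, mem_inter_iff]; tauto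
  rw [hS]
  exact ((((isClosed_le continuous_fst.neg continuous_snd).inter
    (isClosed_le continuous_snd continuous_fst)).inter
    (isClosed_le continuous_fst continuous_const)).inter
    (isClosed_le continuous_const continuous_snd)).inter
    (isClosed_le (continuous_fst.sub continuous_snd) continuous_const)

lemma S_compact : IsCompact S := by
  refine (isCompact_Icc (a := ((0:ℝ), (-2:ℝ))) (b := (2, 2))).of_isClosed_subset S_closed ?_
  rintro ⟨x, y⟩ ⟨h1, h2, h3, h4, h5⟩
  simp only [Icc, mem_setOf_eq, Prod.mk_le_mk]
  exact ⟨⟨by linarith, by linarith⟩, by linarith, by linarith⟩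

lemma S_meas : MeasurableSet S := S_closed.measurableSet

/-- Fubini-type reduction of the integral over `S` to iterated interval integrals. -/
lemma integral_S (F : ℝ → ℝ → ℝ) (hF : Continuous fun p : ℝ × ℝ => F p.1 p.2) :
    ∫ p in S, F p.1 p.2 =
      (∫ x in (0:ℝ)..(3/2), ∫ y in (-x)..x, F x y) +
      ∫ x in (3/2:ℝ)..(2:ℝ), ∫ y in (x - 3)..x, F x y := by
  have hFy : ∀ x : ℝ, Continuous fun y => F x y := fun x =>
    hF.comp (Continuous.prodMk_right x)
  have hint : IntegrableOn (fun p : ℝ × ℝ => F p.1 p.2) S volume :=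
    hF.continuousOn.integrableOn_compact S_compact
  -- continuity of the inner interval integral as a function of x
  have hG' : Continuous fun x => ∫ y in lo x..x, F x y := by
    have h1 : Continuous fun x => ∫ y in (0:ℝ)..x, F x y :=
      intervalIntegral.continuous_parametric_intervalIntegral_of_continuous (μ := volume) hF continuous_id
    have h2 : Continuous fun x => ∫ y in (0:ℝ)..(lo x), F x y :=
      intervalIntegral.continuous_parametric_intervalIntegral_of_continuous (μ := volume) hF lo_cont
    have heq : (fun x => ∫ y in lo x..x, F x y)
        = fun x => (∫ y in (0:ℝ)..x, F x y) - ∫ y in (0:ℝ)..(lo x), F x y := by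
      funext x
      rw [intervalIntegral.integral_interval_sub_left
        (((hFy x)).intervalIntegrable _ _) ((hFy x).intervalIntegrable _ _)]
    rw [heq]
    exact h1.sub h2
  rw [← integral_indicator S_meas]
  have hind : Integrable (S.indicator fun p : ℝ × ℝ => F p.1 p.2)
      (volume.prod volume) := by
    rw [← Measure.volume_eq_prod]
    exact hint.integrable_indicator S_meas
  rw [Measure.volume_eq_prod, integral_prod _ hind]
  have inner_eq : ∀ x : ℝ,
      (∫ y, S.indicator (fun p : ℝ × ℝ => F p.1 p.2) (x, y))
        = (Icc (0:ℝ) 2).indicator (fun x => ∫ y in Icc (lo x) x, F x y) x := by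
    intro x
    by_cases hx : x ∈ Icc (0:ℝ) 2
    · rw [indicator_of_mem hx]
      have hfun : (fun y => S.indicator (fun p : ℝ × ℝ => F p.1 p.2) (x, y))
          = (Icc (lo x) x).indicator (fun y => F x y) := by
        funext y
        by_cases hy : y ∈ Icc (lo x) x
        · rw [indicator_of_mem hy, indicator_of_mem]
          rw [S_eq]; exact ⟨hx, hy⟩
        · rw [indicator_of_notMem hy, indicator_of_notMem]
          rw [S_eq]; exact fun h => hy h.2
      rw [hfun, integral_indicator measurableSet_Icc]
    · rw [indicator_of_notMem hx]
      have hfun : (fun y => S.indicator (fun p : ℝ × ℝ => F p.1 p.2) (x, y))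
          = fun _ => (0:ℝ) := by
        funext y
        apply indicator_of_notMem
        rw [S_eq]; exact fun h => hx h.1
      rw [hfun, integral_zero]
  simp only [inner_eq]
  rw [integral_indicator measurableSet_Icc]
  have hIcc_eq : EqOn (fun x => ∫ y in Icc (lo x) x, F x y)
      (fun x => ∫ y in lo x..x, F x y) (Icc 0 2) := by
    intro x hx
    have hlx : lo x ≤ x := max_le (by linarith [hx.1]) (by linarith)
    simp only
    rw [MeasureTheory.integral_Icc_eq_integral_Ioc, ← intervalIntegral.integral_of_le hlx]
  rw [setIntegral_congr_fun measurableSet_Icc hIcc_eq]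
  rw [MeasureTheory.integral_Icc_eq_integral_Ioc]
  rw [← Ioc_union_Ioc_eq_Ioc (by norm_num : (0:ℝ) ≤ 3/2) (by norm_num : (3/2:ℝ) ≤ 2)]
  rw [setIntegral_union (Ioc_disjoint_Ioc_of_le le_rfl) measurableSet_Ioc
    (hG'.integrableOn_Icc.mono_set Ioc_subset_Icc_self)
    (hG'.integrableOn_Icc.mono_set Ioc_subset_Icc_self)]
  congr 1
  · rw [← intervalIntegral.integral_of_le (by norm_num : (0:ℝ) ≤ 3/2)]
    apply intervalIntegral.integral_congr
    intro x hx
    rw [uIcc_of_le (by norm_num : (0:ℝ) ≤ 3/2)] at hx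
    have : lo x = -x := max_eq_left (by cases hx; linarith)
    simp only [this]
  · rw [← intervalIntegral.integral_of_le (by norm_num : (3/2:ℝ) ≤ 2)]
    apply intervalIntegral.integral_congr
    intro x hx
    rw [uIcc_of_le (by norm_num : (3/2:ℝ) ≤ 2)] at hx
    have : lo x = x - 3 := max_eq_right (by cases hx; linarith)
    simp only [this]

lemma denom_eval : ∫ p in S, (p.1 - p.2) ^ 2 * (p.1 + p.2) ^ 2 = 219/20 := by
  rw [integral_S (fun x y => (x - y) ^ 2 * (x + y) ^ 2) (by fun_prop)]
  have key : ∀ x a b : ℝ, (∫ y in a..b, (x - y) ^ 2 * (x + y) ^ 2)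
      = (x^4*b - 2/3*x^2*b^3 + b^5/5) - (x^4*a - 2/3*x^2*a^3 + a^5/5) := by
    intro x a b
    have hd : ∀ y : ℝ, HasDerivAt (fun y => x^4*y - 2/3*x^2*y^3 + y^5/5)
        ((x - y) ^ 2 * (x + y) ^ 2) y := by
      intro y
      have h := ((HasDerivAt.const_mul (x^4) (hasDerivAt_id' (x := y))).sub
        (HasDerivAt.const_mul (2/3*x^2) (hasDerivAt_pow 3 y))).add
        ((hasDerivAt_pow 5 y).div_const 5)
      convert h using 1
      all_goals first
        | (funext t; simp only [Pi.add_apply, Pi.sub_apply] <;> ring)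
        | (push_cast; ring)
        | rfl
    rw [intervalIntegral.integral_eq_sub_of_hasDerivAt (fun y _ => hd y)
      ((by fun_prop : Continuous fun y : ℝ => (x - y) ^ 2 * (x + y) ^ 2).intervalIntegrable _ _)]
  have inner1 : ∀ x : ℝ, (∫ y in (-x)..x, (x - y) ^ 2 * (x + y) ^ 2) = 16/15*x^5 := by
    intro x; rw [key]; ring
  have inner2 : ∀ x : ℝ, (∫ y in (x - 3)..x, (x - y) ^ 2 * (x + y) ^ 2)
      = 243/5 - 81*x + 36*x^2 := by
    intro x; rw [key]; ring
  simp only [inner1, inner2]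
  have o1 : (∫ x in (0:ℝ)..(3/2), 16/15*x^5) = 81/40 := by
    rw [intervalIntegral.integral_const_mul, integral_pow]
    norm_num
  have o2 : (∫ x in (3/2:ℝ)..(2:ℝ), (243/5 - 81*x + 36*x^2)) = 357/40 := by
    have hd : ∀ x : ℝ, HasDerivAt (fun x => 243/5*x - 81/2*x^2 + 12*x^3)
        (243/5 - 81*x + 36*x^2) x := by
      intro x
      have h := ((HasDerivAt.const_mul ((243:ℝ)/5) (hasDerivAt_id' (x := x))).sub
        (HasDerivAt.const_mul ((81:ℝ)/2) (hasDerivAt_pow 2 x))).add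
        (HasDerivAt.const_mul (12:ℝ) (hasDerivAt_pow 3 x))
      convert h using 1
      all_goals first
        | (funext t; simp only [Pi.add_apply, Pi.sub_apply] <;> ring)
        | (push_cast; ring)
        | rfl
    rw [intervalIntegral.integral_eq_sub_of_hasDerivAt (fun x _ => hd x)
      ((by fun_prop : Continuous fun x : ℝ => 243/5 - 81*x + 36*x^2).intervalIntegrable _ _)]
    norm_num
  rw [o1, o2]
  norm_num

lemma numer_eval : ∫ p in S, (p.1 - p.2) ^ 2 * (p.1 + p.2) ^ 2 * p.1 = 10467/560 := by
  rw [integral_S (fun x y => (x - y) ^ 2 * (x + y) ^ 2 * x) (by fun_prop)]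
  have key : ∀ x a b : ℝ, (∫ y in a..b, (x - y) ^ 2 * (x + y) ^ 2 * x)
      = (x^5*b - 2/3*x^3*b^3 + x*b^5/5) - (x^5*a - 2/3*x^3*a^3 + x*a^5/5) := by
    intro x a b
    have hd : ∀ y : ℝ, HasDerivAt (fun y => x^5*y - 2/3*x^3*y^3 + x*y^5/5)
        ((x - y) ^ 2 * (x + y) ^ 2 * x) y := by
      intro y
      have h := ((HasDerivAt.const_mul (x^5) (hasDerivAt_id' (x := y))).sub
        (HasDerivAt.const_mul (2/3*x^3) (hasDerivAt_pow 3 y))).add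
        (((hasDerivAt_pow 5 y).div_const 5).const_mul x)
      convert h using 1
      all_goals first
        | (funext t; simp only [Pi.add_apply, Pi.sub_apply] <;> ring)
        | (push_cast; ring)
        | rfl
    rw [intervalIntegral.integral_eq_sub_of_hasDerivAt (fun y _ => hd y)
      ((by fun_prop :
        Continuous fun y : ℝ => (x - y) ^ 2 * (x + y) ^ 2 * x).intervalIntegrable _ _)]
  have inner1 : ∀ x : ℝ, (∫ y in (-x)..x, (x - y) ^ 2 * (x + y) ^ 2 * x) = 16/15*x^6 := by
    intro x; rw [key]; ring
  have inner2 : ∀ x : ℝ, (∫ y in (x - 3)..x, (x - y) ^ 2 * (x + y) ^ 2 * x)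
      = 243/5*x - 81*x^2 + 36*x^3 := by
    intro x; rw [key]; ring
  simp only [inner1, inner2]
  have o1 : (∫ x in (0:ℝ)..(3/2), 16/15*x^6) = 729/280 := by
    rw [intervalIntegral.integral_const_mul, integral_pow]
    norm_num
  have o2 : (∫ x in (3/2:ℝ)..(2:ℝ), (243/5*x - 81*x^2 + 36*x^3)) = 1287/80 := by
    have hd : ∀ x : ℝ, HasDerivAt (fun x => 243/10*x^2 - 27*x^3 + 9*x^4)
        (243/5*x - 81*x^2 + 36*x^3) x := by
      intro x
      have h := ((HasDerivAt.const_mul ((243:ℝ)/10) (hasDerivAt_pow 2 x)).sub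
        (HasDerivAt.const_mul ((27:ℝ)) (hasDerivAt_pow 3 x))).add
        (HasDerivAt.const_mul (9:ℝ) (hasDerivAt_pow 4 x))
      convert h using 1
      all_goals first
        | (funext t; simp only [Pi.add_apply, Pi.sub_apply] <;> ring)
        | (push_cast; ring)
        | rfl
    rw [intervalIntegral.integral_eq_sub_of_hasDerivAt (fun x _ => hd x)
      ((by fun_prop :
        Continuous fun x : ℝ => 243/5*x - 81*x^2 + 36*x^3).intervalIntegrable _ _)]
    norm_num
  rw [o1, o2]
  norm_num

/-- The measurable equivalence `ℝ × ℝ ≃ᵐ EuclideanSpace ℝ (Fin 2)`. -/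
def fmap : (ℝ × ℝ) ≃ᵐ EuclideanSpace ℝ (Fin 2) :=
  (((MeasurableEquiv.toLp 2 (Fin 2 → ℝ)).symm).trans (MeasurableEquiv.piFinTwo fun _ => ℝ)).symm

lemma fmap_mp : MeasurePreserving fmap volume volume :=
  MeasurePreserving.symm _
    ((EuclideanSpace.volume_preserving_symm_measurableEquiv_toLp (Fin 2)).trans
      (volume_preserving_piFinTwo fun _ => ℝ))

end

end Stmt9Aux

open Stmt9Aux

/-- For the first K-unstable Fano SO₄(ℂ)-compactification, the π-weighted barycenter of
its moment polytope P₊ does not lie in the closed cone 2ρ + Ξ̄, i.e. b₁ - 2 < |b₂|. -/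
theorem stmt9 (P : Set (EuclideanSpace ℝ (Fin 2)))
    (hP : P = {v : EuclideanSpace ℝ (Fin 2) |
      -(v 0) ≤ v 1 ∧ v 1 ≤ v 0 ∧ v 0 ≤ 2 ∧ -2 ≤ v 1 ∧ v 0 - v 1 ≤ 3})
    (π : EuclideanSpace ℝ (Fin 2) → ℝ)
    (hπ : ∀ v, π v = (v 0 - v 1) ^ 2 * (v 0 + v 1) ^ 2)
    (b : EuclideanSpace ℝ (Fin 2))
    (hb : b = (∫ v in P, π v)⁻¹ • ∫ v in P, π v • v) :
    b 0 - 2 < |b 1| := by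
  have hpre : fmap ⁻¹' P = S := by
    ext p
    simp only [hP, S, mem_preimage, mem_setOf_eq]
    rfl
  have hc0 : Continuous fun v : EuclideanSpace ℝ (Fin 2) => v 0 :=
    (EuclideanSpace.proj (0 : Fin 2)).continuous
  have hc1 : Continuous fun v : EuclideanSpace ℝ (Fin 2) => v 1 :=
    (EuclideanSpace.proj (1 : Fin 2)).continuous
  have hcπ : Continuous π := by
    have : π = fun v => (v 0 - v 1) ^ 2 * (v 0 + v 1) ^ 2 := funext hπ
    rw [this]
    fun_prop
  -- compactness of P
  have hPclosed : IsClosed P := by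
    have hPe : P = {v : EuclideanSpace ℝ (Fin 2) | -(v 0) ≤ v 1} ∩ {v | v 1 ≤ v 0} ∩
        {v | v 0 ≤ 2} ∩ {v | -2 ≤ v 1} ∩ {v | v 0 - v 1 ≤ 3} := by
      rw [hP]; ext v; simp only [mem_setOf_eq, mem_inter_iff]; tauto
    rw [hPe]
    exact ((((isClosed_le hc0.neg hc1).inter (isClosed_le hc1 hc0)).inter
      (isClosed_le hc0 continuous_const)).inter
      (isClosed_le continuous_const hc1)).inter
      (isClosed_le (hc0.sub hc1) continuous_const)
  have hPcpt : IsCompact P := by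
    refine Metric.isCompact_of_isClosed_isBounded hPclosed ?_
    rw [isBounded_iff_forall_norm_le]
    refine ⟨3, fun v hv => ?_⟩
    rw [hP] at hv
    obtain ⟨h1, h2, h3, h4, h5⟩ := hv
    rw [EuclideanSpace.norm_eq]
    have : Real.sqrt 9 = 3 := by
      rw [show (9:ℝ) = 3^2 by norm_num, Real.sqrt_sq (by norm_num)]
    rw [← this]
    apply Real.sqrt_le_sqrt
    rw [Fin.sum_univ_two]
    simp only [Real.norm_eq_abs, sq_abs]
    nlinarith
  -- integrability
  have hIntπ : IntegrableOn π P volume :=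
    hcπ.continuousOn.integrableOn_compact hPcpt
  have hIntv : IntegrableOn (fun v => π v • v) P volume :=
    (hcπ.smul continuous_id).continuousOn.integrableOn_compact hPcpt
  -- the two integrals
  have hD : (∫ v in P, π v) = 219/20 := by
    rw [← fmap_mp.setIntegral_preimage_emb fmap.measurableEmbedding π P, hpre]
    rw [show (fun p : ℝ × ℝ => π (fmap p)) = fun p : ℝ × ℝ =>
      (p.1 - p.2) ^ 2 * (p.1 + p.2) ^ 2 from funext fun p => hπ _]
    exact denom_eval
  have hN : (∫ v in P, π v * v 0) = 10467/560 := by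
    rw [← fmap_mp.setIntegral_preimage_emb fmap.measurableEmbedding
      (fun v => π v * v 0) P, hpre]
    rw [show (fun p : ℝ × ℝ => π (fmap p) * (fmap p) 0) = fun p : ℝ × ℝ =>
      (p.1 - p.2) ^ 2 * (p.1 + p.2) ^ 2 * p.1 from funext fun p => by rw [hπ]; rfl]
    exact numer_eval
  -- component of the vector integral
  have hcomp : (∫ v in P, π v • v) 0 = ∫ v in P, π v * v 0 := by
    have h := (EuclideanSpace.proj (0 : Fin 2)).integral_comp_comm hIntv
    have h2 : (fun v => EuclideanSpace.proj (0 : Fin 2) (π v • v))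
        = fun v => π v * v 0 := by
      funext v; rfl
    rw [h2] at h
    exact h.symm
  have hb0 : b 0 = (219/20 : ℝ)⁻¹ * (10467/560) := by
    rw [hb]
    show (∫ v in P, π v)⁻¹ * (∫ v in P, π v • v) 0 = _
    rw [hD, hcomp, hN]
  have : b 0 - 2 < 0 := by rw [hb0]; norm_num
  have := abs_nonneg (b 1)
  linarith
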